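/- The space Δ, consisting of all time-translates x(· + τ) (τ ∈ ℝ) of functions x : ℝ → S that are constant on each interval [nh, (n+1)h) and whose sequence of values (x(nh))_{n∈ℤ} is an admissible bi-infinite path in a finite directed N-graph G, is compact in the metric d. -/

import Mathlib

open MeasureTheory Filter Topology

/-- Piecewise constant functions on intervals `[nh,(n+1)h)`. -/
def PC (S : Type*) (h : ℝ) : Set (ℝ → S) :=
  {x | ∀ n : ℤ, ∀ t ∈ Set.Ico ((n : ℝ) * h) (((n : ℝ) + 1) * h), x t = x ((n : ℝ) * h)}

/-- Aligned admissible functions: piecewise constant with admissible value sequence. -/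
def Adm {S : Type*} (E : S → S → Prop) (h : ℝ) : Set (ℝ → S) :=
  {x | x ∈ PC S h ∧ ∀ n : ℤ, E (x ((n : ℝ) * h)) (x (((n : ℝ) + 1) * h))}

/-- `Δ`: all time-translates of aligned admissible functions. -/
def DeltaSet {S : Type*} (E : S → S → Prop) (h : ℝ) : Set (ℝ → S) :=
  {y | ∃ x ∈ Adm E h, ∃ τ : ℝ, y = fun s => x (s + τ)}

/-- The metric in integral form. -/
noncomputable def dInt {S : Type*} [DecidableEq S] (h : ℝ) (x y : ℝ → S) : ℝ :=
  (1 / h) * ∫ t : ℝ, ((4 : ℝ) ^ (-(|⌊t / h⌋| : ℤ))) * (if x t = y t then (0 : ℝ) else 1)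

lemma pc_eval {S : Type*} {h : ℝ} (hh : 0 < h) {z : ℝ → S} (hz : z ∈ PC S h) (t : ℝ) :
    z t = z ((⌊t / h⌋ : ℝ) * h) := by
  apply hz ⌊t / h⌋ t
  constructor
  · rw [← le_div_iff₀ hh]
    exact Int.floor_le _
  · rw [← div_lt_iff₀ hh]
    exact Int.lt_floor_add_one _

lemma adm_shift {S : Type*} {E : S → S → Prop} {h : ℝ} {z : ℝ → S} (hz : z ∈ Adm E h) (m : ℤ) :
    (fun s => z (s + (m : ℝ) * h)) ∈ Adm E h := by
  obtain ⟨hpc, hE⟩ := hz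
  constructor
  · intro n t ht
    simp only
    have e1 : (n : ℝ) * h + (m : ℝ) * h = ((n + m : ℤ) : ℝ) * h := by push_cast; ring
    have h1 : z (t + (m : ℝ) * h) = z (((n + m : ℤ) : ℝ) * h) := by
      apply hpc (n + m)
      constructor
      · push_cast; nlinarith [ht.1]
      · push_cast; nlinarith [ht.2]
    rw [h1, ← e1]
  · intro n
    have e1 : (n : ℝ) * h + (m : ℝ) * h = ((n + m : ℤ) : ℝ) * h := by push_cast; ring
    have e2 : ((n : ℝ) + 1) * h + (m : ℝ) * h = (((n + m : ℤ) : ℝ) + 1) * h := by push_cast; ring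
    simp only [e1, e2]
    exact hE (n + m)

lemma integrable_exp_neg_abs {c : ℝ} (hc : 0 < c) :
    Integrable (fun t : ℝ => Real.exp (-c * |t|)) := by
  have h1 : IntegrableOn (fun t : ℝ => Real.exp (-c * |t|)) (Set.Ioi 0) :=
    (exp_neg_integrableOn_Ioi 0 hc).congr_fun
      (fun t ht => by simp [abs_of_pos (Set.mem_Ioi.mp ht)]) measurableSet_Ioi
  rw [← integrableOn_univ, ← Set.Iio_union_Ici (a := (0:ℝ)), integrableOn_union,
    integrableOn_Ici_iff_integrableOn_Ioi]
  refine ⟨?_, h1⟩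
  rw [← (Measure.measurePreserving_neg (volume : Measure ℝ)).integrableOn_comp_preimage
      (Homeomorph.neg ℝ).measurableEmbedding]
  simpa [Function.comp_def] using h1

/-- `Δ` is (sequentially) compact in the metric `d`: every sequence in `Δ` has a
subsequence converging to an element of `Δ`. -/
theorem Delta_compact (S : Type*) [Fintype S] [DecidableEq S] (E : S → S → Prop)
    (hout : ∀ v : S, ∃ w : S, E v w) (hin : ∀ v : S, ∃ w : S, E w v)
    (h : ℝ) (hh : 0 < h)
    (x : ℕ → ℝ → S) (hx : ∀ n, x n ∈ DeltaSet E h) :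
    ∃ y ∈ DeltaSet E h, ∃ φ : ℕ → ℕ, StrictMono φ ∧
      Tendsto (fun k => dInt h (x (φ k)) y) atTop (nhds 0) := by
  classical
  -- normalize the representations so that the shift lies in `[0, h]`
  have hx' : ∀ n, ∃ z ∈ Adm E h, ∃ τ ∈ Set.Icc (0:ℝ) h, x n = fun s => z (s + τ) := by
    intro n
    obtain ⟨z, hz, τ, hτ⟩ := hx n
    have hfl : ((⌊τ / h⌋ : ℝ)) * h ≤ τ := by
      have := mul_le_mul_of_nonneg_right (Int.floor_le (τ / h)) hh.le
      rwa [div_mul_cancel₀ _ hh.ne'] at this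
    have hfl2 : τ < ((⌊τ / h⌋ : ℝ)) * h + h := by
      have := mul_lt_mul_of_pos_right (Int.lt_floor_add_one (τ / h)) hh
      rw [div_mul_cancel₀ _ hh.ne'] at this
      nlinarith
    refine ⟨fun s => z (s + (⌊τ / h⌋ : ℝ) * h), adm_shift hz _,
      τ - (⌊τ / h⌋ : ℝ) * h, ⟨by linarith, by linarith⟩, ?_⟩
    rw [hτ]
    funext s
    simp only
    congr 1
    ring
  choose z hz τ hτ hrep using hx'
  -- put the discrete topology on `S` and extract a convergent subsequence
  letI : TopologicalSpace S := ⊥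
  haveI : DiscreteTopology S := ⟨rfl⟩
  set u : ℕ → ℝ × (ℤ → S) := fun n => (τ n, fun i => z n ((i : ℝ) * h)) with hu
  have hK : IsCompact ((Set.Icc (0:ℝ) h) ×ˢ (Set.univ : Set (ℤ → S))) :=
    isCompact_Icc.prod isCompact_univ
  have hmem : ∀ n, u n ∈ (Set.Icc (0:ℝ) h) ×ˢ (Set.univ : Set (ℤ → S)) :=
    fun n => Set.mk_mem_prod (hτ n) (Set.mem_univ _)
  obtain ⟨⟨τs, ω⟩, -, φ, hφ, hlim⟩ := hK.tendsto_subseq hmem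
  have hτlim : Tendsto (fun k => τ (φ k)) atTop (𝓝 τs) :=
    (continuous_fst.tendsto _).comp hlim
  have hωlim : ∀ i : ℤ, ∀ᶠ k in atTop, z (φ k) ((i : ℝ) * h) = ω i := by
    intro i
    have h1 : Tendsto (fun k => z (φ k) ((i : ℝ) * h)) atTop (𝓝 (ω i)) :=
      ((continuous_apply i).tendsto _).comp ((continuous_snd.tendsto _).comp hlim)
    rwa [nhds_discrete, tendsto_pure] at h1
  -- the limit symbolic sequence is admissible
  have hEω : ∀ i : ℤ, E (ω i) (ω (i + 1)) := by
    intro i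
    obtain ⟨k, hk1, hk2⟩ := ((hωlim i).and (hωlim (i + 1))).exists
    have hEk := (hz (φ k)).2 i
    rw [hk1] at hEk
    have e : ((i : ℝ) + 1) * h = (((i + 1 : ℤ)) : ℝ) * h := by push_cast; ring
    rw [e, hk2] at hEk
    exact hEk
  -- the limit function
  have hfl : ∀ i : ℤ, ⌊((i : ℝ) * h) / h⌋ = i := by
    intro i
    rw [mul_div_cancel_right₀ _ hh.ne', Int.floor_intCast]
  set zs : ℝ → S := fun t => ω ⌊t / h⌋ with hzs
  have hzsAdm : zs ∈ Adm E h := by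
    constructor
    · intro n t ht
      simp only [hzs]
      congr 1
      rw [hfl n]
      rw [Int.floor_eq_iff]
      constructor
      · rw [le_div_iff₀ hh]; exact ht.1
      · rw [div_lt_iff₀ hh]; exact_mod_cast ht.2
    · intro n
      simp only [hzs]
      have e2 : ((n : ℝ) + 1) * h = (((n + 1 : ℤ)) : ℝ) * h := by push_cast; ring
      rw [hfl n, e2, hfl (n + 1)]
      exact hEω n
  refine ⟨fun s => zs (s + τs), ⟨zs, hzsAdm, τs, rfl⟩, φ, hφ, ?_⟩
  -- convergence via dominated convergence
  set c : ℝ := Real.log 4 / h with hc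
  have hL : 0 < Real.log 4 := Real.log_pos (by norm_num)
  have hc0 : 0 < c := div_pos hL hh
  set bound : ℝ → ℝ := fun t => 4 * Real.exp (-c * |t|) with hbound
  have hboundInt : Integrable bound := (integrable_exp_neg_abs hc0).const_mul 4
  set F : ℕ → ℝ → ℝ := fun k t =>
    ((4 : ℝ) ^ (-(|⌊t / h⌋| : ℤ))) * (if x (φ k) t = zs (t + τs) then (0:ℝ) else 1) with hF
  have hxk : ∀ k t, x (φ k) t = z (φ k) ((⌊(t + τ (φ k)) / h⌋ : ℝ) * h) := by
    intro k t
    rw [hrep (φ k)]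
    exact pc_eval hh (hz (φ k)).1 _
  have hmeas : ∀ k, AEStronglyMeasurable (F k) volume := by
    intro k
    have hFeq : F k = (fun p : ℤ × ℤ × ℤ => ((4 : ℝ) ^ (-(|p.1| : ℤ))) *
        (if z (φ k) ((p.2.1 : ℝ) * h) = ω p.2.2 then (0:ℝ) else 1)) ∘
        (fun t : ℝ => (⌊t / h⌋, ⌊(t + τ (φ k)) / h⌋, ⌊(t + τs) / h⌋)) := by
      funext t
      simp only [Function.comp, hF, hzs]
      rw [hxk k t]
    rw [hFeq]
    apply Measurable.aestronglyMeasurable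
    apply (measurable_of_countable _).comp
    refine Measurable.prod ?_ (Measurable.prod ?_ ?_)
    · exact Int.measurable_floor.comp (measurable_id.div_const h)
    · exact Int.measurable_floor.comp ((measurable_id.add_const _).div_const h)
    · exact Int.measurable_floor.comp ((measurable_id.add_const _).div_const h)
  have hdom : ∀ k, ∀ᵐ t : ℝ, ‖F k t‖ ≤ bound t := by
    intro k
    filter_upwards with t
    set m := ⌊t / h⌋ with hm
    have hw0 : (0:ℝ) < (4 : ℝ) ^ (-(|m| : ℤ)) := zpow_pos (by norm_num) _
    have hind0 : (0:ℝ) ≤ (if x (φ k) t = zs (t + τs) then (0:ℝ) else 1) := by positivity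
    have hind1 : (if x (φ k) t = zs (t + τs) then (0:ℝ) else 1) ≤ 1 := by
      split <;> norm_num
    have hnorm : ‖F k t‖ ≤ (4 : ℝ) ^ (-(|m| : ℤ)) := by
      simp only [hF, ← hm, Real.norm_eq_abs, abs_mul, abs_of_pos hw0, abs_of_nonneg hind0]
      nlinarith
    refine hnorm.trans ?_
    -- now show `4 ^ (-|m|) ≤ 4 * exp (-c * |t|)`
    have h4 : ((4:ℝ) : ℝ) ^ (-(|m| : ℤ)) = Real.exp (Real.log 4 * (-(|(m:ℝ)|))) := by
      rw [← Real.rpow_intCast (4:ℝ) (-(|m|)), Real.rpow_def_of_pos (by norm_num : (0:ℝ) < 4)]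
      push_cast
      ring_nf
    have hbt : bound t = Real.exp (Real.log 4 + -c * |t|) := by
      rw [hbound, Real.exp_add, Real.exp_log (by norm_num : (0:ℝ) < 4)]
    rw [h4, hbt, Real.exp_le_exp]
    -- `|t| ≤ (|m| + 1) * h`
    have hm1 : t / h < (m : ℝ) + 1 := Int.lt_floor_add_one _
    have hm2 : (m : ℝ) ≤ t / h := Int.floor_le _
    have habs : |t / h| ≤ |(m : ℝ)| + 1 :=
      abs_le.mpr ⟨by nlinarith [neg_abs_le (m:ℝ)], by nlinarith [le_abs_self (m:ℝ)]⟩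
    have htle : |t| ≤ (|(m : ℝ)| + 1) * h := by
      have : |t| = |t / h| * h := by
        rw [abs_div, abs_of_pos hh]
        field_simp
      rw [this]
      exact mul_le_mul_of_nonneg_right habs hh.le
    have hch : c * h = Real.log 4 := div_mul_cancel₀ _ hh.ne'
    have key2 : c * |t| ≤ Real.log 4 * (|(m:ℝ)| + 1) := by
      calc c * |t| ≤ c * ((|(m:ℝ)| + 1) * h) := mul_le_mul_of_nonneg_left htle hc0.le
        _ = (c * h) * (|(m:ℝ)| + 1) := by ring
        _ = Real.log 4 * (|(m:ℝ)| + 1) := by rw [hch]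
    nlinarith
  have hptw : ∀ᵐ t : ℝ, Tendsto (fun k => F k t) atTop (𝓝 0) := by
    have hbad : volume (Set.range (fun m : ℤ => (m : ℝ) * h - τs)) = 0 :=
      (Set.countable_range _).measure_zero _
    filter_upwards [measure_eq_zero_iff_ae_notMem.mp hbad] with t ht
    set n := ⌊(t + τs) / h⌋ with hn
    have h1 : (n : ℝ) * h ≤ t + τs := by
      have := mul_le_mul_of_nonneg_right (Int.floor_le ((t + τs) / h)) hh.le
      rwa [div_mul_cancel₀ _ hh.ne'] at this
    have hne : (n : ℝ) * h ≠ t + τs := by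
      intro hcon
      exact ht ⟨n, show (n:ℝ) * h - τs = t by linarith⟩
    have h1' : (n : ℝ) * h < t + τs := lt_of_le_of_ne h1 hne
    have h2 : t + τs < ((n : ℝ) + 1) * h := by
      have := mul_lt_mul_of_pos_right (Int.lt_floor_add_one ((t + τs) / h)) hh
      rw [div_mul_cancel₀ _ hh.ne'] at this
      nlinarith
    have hev1 : ∀ᶠ k in atTop, τ (φ k) ∈ Set.Ioo ((n : ℝ) * h - t) (((n : ℝ) + 1) * h - t) :=
      hτlim.eventually (Ioo_mem_nhds (by linarith) (by linarith))
    have hev : ∀ᶠ k in atTop, F k t = 0 := by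
      filter_upwards [hev1, hωlim n] with k hk1 hk2
      have hfloor : ⌊(t + τ (φ k)) / h⌋ = n := by
        rw [Int.floor_eq_iff]
        constructor
        · rw [le_div_iff₀ hh]
          have := hk1.1
          linarith
        · rw [div_lt_iff₀ hh]
          have := hk1.2
          push_cast
          linarith
      have heqv : x (φ k) t = zs (t + τs) := by
        rw [hxk k t, hfloor, hzs]
        simp only
        rw [← hn, hk2]
      simp [hF, heqv]
    refine Tendsto.congr' ?_ tendsto_const_nhds
    filter_upwards [hev] with k hk
    exact hk.symm
  have key : Tendsto (fun k => ∫ t : ℝ, F k t) atTop (𝓝 (∫ _t : ℝ, (0:ℝ))) :=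
    tendsto_integral_of_dominated_convergence bound hmeas hboundInt hdom hptw
  simp only [integral_zero] at key
  have final : Tendsto (fun k => dInt h (x (φ k)) (fun s => zs (s + τs))) atTop
      (𝓝 ((1 / h) * 0)) := by
    simp only [dInt]
    exact key.const_mul (1 / h)
  simpa using final
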